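/- arXiv:0809.5173 — 10 statements merged into one kernel-verified Lean document; each statement's English description precedes it below -/
import Mathlib

section
/- Let x and y be intervals. Then: (i) if l(y) < l(x), there is a unique interval A with l(A) > 0 such that (x,y) ~ (A,0); (ii) if l(x) < l(y), there is a unique interval A with l(A) > 0 such that (x,y) ~ (0,A); (iii) if l(x) = l(y), there is a unique real number α such that (x,y) ~ ([α,α], 0). -/
/-- Normal forms for classes of pairs of intervals under
`(x,y) ~ (z,t) ⟺ x + t = y + z`. -/
theorem interval_pair_normal_form (x y : ℝ × ℝ) (hx : x.1 ≤ x.2) (hy : y.1 ≤ y.2) :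
    -- (i) if `l(y) < l(x)`, a unique nondegenerate interval `A` with `(x,y) ~ (A,0)`
    (y.2 - y.1 < x.2 - x.1 →
      ∃! A : ℝ × ℝ, (A.1 ≤ A.2 ∧ 0 < A.2 - A.1) ∧ x + ((0 : ℝ), (0 : ℝ)) = y + A) ∧
    -- (ii) if `l(x) < l(y)`, a unique nondegenerate interval `A` with `(x,y) ~ (0,A)`
    (x.2 - x.1 < y.2 - y.1 →
      ∃! A : ℝ × ℝ, (A.1 ≤ A.2 ∧ 0 < A.2 - A.1) ∧ x + A = y + ((0 : ℝ), (0 : ℝ))) ∧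
    -- (iii) if `l(x) = l(y)`, a unique real `α` with `(x,y) ~ ([α,α],0)`
    (x.2 - x.1 = y.2 - y.1 →
      ∃! α : ℝ, x + ((0 : ℝ), (0 : ℝ)) = y + (α, α)) := by
  refine ⟨fun h => ?_, fun h => ?_, fun h => ?_⟩
  · refine ⟨(x.1 - y.1, x.2 - y.2), ⟨⟨by dsimp only; linarith, by dsimp only; linarith⟩, ?_⟩, ?_⟩
    · ext <;> simp <;> ring
    · rintro ⟨a, b⟩ ⟨-, hab⟩
      have h1 := congrArg Prod.fst hab
      have h2 := congrArg Prod.snd hab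
      simp at h1 h2
      ext <;> simp <;> linarith
  · refine ⟨(y.1 - x.1, y.2 - x.2), ⟨⟨by dsimp only; linarith, by dsimp only; linarith⟩, ?_⟩, ?_⟩
    · ext <;> simp <;> ring
    · rintro ⟨a, b⟩ ⟨-, hab⟩
      have h1 := congrArg Prod.fst hab
      have h2 := congrArg Prod.snd hab
      simp at h1 h2
      ext <;> simp <;> linarith
  · refine ⟨x.1 - y.1, ?_, ?_⟩
    · ext <;> simp <;> linarith
    · intro a hab
      have h1 := congrArg Prod.fst hab
      simp at h1
      linarith
end

section
/- Let a ≤ b and c ≤ d be real numbers, and let m = min(ac, ad, bc, bd) and M = max(ac, ad, bc, bd), so that [m, M] is the classical product of the intervals [a,b] and [c,d]. Then the norm is submultiplicative: (M − m) + |M + m|/2 ≤ ((b − a) + |a + b|/2) · ((d − c) + |c + d|/2). -/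
set_option maxHeartbeats 1000000

private lemma norm_eq_aux (a b : ℝ) (hab : a ≤ b) :
    (b - a) + |a + b| / 2 = max |a| |b| + (b - a) / 2 := by
  rcases le_total 0 (a + b) with h | h
  · have hb : 0 ≤ b := by linarith
    have : max |a| |b| = b := by
      rw [abs_of_nonneg hb, max_eq_right]
      exact abs_le.mpr ⟨by linarith, hab⟩
    rw [this, abs_of_nonneg h]; ring
  · have ha : a ≤ 0 := by linarith
    have : max |a| |b| = -a := by
      rw [abs_of_nonpos ha, max_eq_left]
      exact abs_le.mpr ⟨by linarith, by linarith⟩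
    rw [this, abs_of_nonpos h]; ring

/-- Submultiplicativity of the norm `||[a,b]|| = (b−a) + |a+b|/2` for the
classical product of intervals. -/
theorem interval_norm_submultiplicative (a b c d : ℝ) (hab : a ≤ b) (hcd : c ≤ d) :
    let m : ℝ := min (min (a * c) (a * d)) (min (b * c) (b * d))
    let M : ℝ := max (max (a * c) (a * d)) (max (b * c) (b * d))
    (M - m) + |M + m| / 2 ≤ ((b - a) + |a + b| / 2) * ((d - c) + |c + d| / 2) := by
  intro m M
  set A := max |a| |b| with hA
  set C := max |c| |d| with hC
  have hA0 : 0 ≤ A := le_trans (abs_nonneg a) (le_max_left _ _)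
  have hC0 : 0 ≤ C := le_trans (abs_nonneg c) (le_max_left _ _)
  have haA : |a| ≤ A := le_max_left _ _
  have hbA : |b| ≤ A := le_max_right _ _
  have hcC : |c| ≤ C := le_max_left _ _
  have hdC : |d| ≤ C := le_max_right _ _
  have ha1 := abs_le.mp haA
  have hb1 := abs_le.mp hbA
  have hc1 := abs_le.mp hcC
  have hd1 := abs_le.mp hdC
  obtain ⟨ha2, ha3⟩ := ha1
  obtain ⟨hb2, hb3⟩ := hb1
  obtain ⟨hc2, hc3⟩ := hc1
  obtain ⟨hd2, hd3⟩ := hd1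
  -- bound on each product
  have hp : ∀ x y : ℝ, -A ≤ x → x ≤ A → -C ≤ y → y ≤ C → x * y ≤ A * C ∧ -(A * C) ≤ x * y := by
    intro x y h1 h2 h3 h4
    constructor <;> nlinarith [mul_nonneg hA0 hC0]
  have hac := hp a c ha2 ha3 hc2 hc3
  have had := hp a d ha2 ha3 hd2 hd3
  have hbc := hp b c hb2 hb3 hc2 hc3
  have hbd := hp b d hb2 hb3 hd2 hd3
  have hMle : M ≤ A * C := by
    apply max_le <;> apply max_le
    exacts [hac.1, had.1, hbc.1, hbd.1]
  have hmge : -(A * C) ≤ m := by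
    apply le_min <;> apply le_min
    exacts [hac.2, had.2, hbc.2, hbd.2]
  -- key bound on the width
  have hK : M - m ≤ A * (d - c) + C * (b - a) := by
    have hpq : ∀ x y x' y' : ℝ, -A ≤ x → x ≤ A → -C ≤ y → y ≤ C →
        -A ≤ x' → x' ≤ A → -C ≤ y' → y' ≤ C → c ≤ y → y ≤ d → c ≤ y' → y' ≤ d →
        a ≤ x → x ≤ b → a ≤ x' → x' ≤ b →
        x * y - x' * y' ≤ A * (d - c) + C * (b - a) := by
      intro x y x' y' h1 h2 h3 h4 h5 h6 h7 h8 h9 h10 h11 h12 h13 h14 h15 h16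
      have e1 : x * y - x' * y' = x * (y - y') + (x - x') * y' := by ring
      rw [e1]
      have b1 : x * (y - y') ≤ A * (d - c) := by
        have : x * (y - y') ≤ |x| * |y - y'| := le_trans (le_abs_self _) (abs_mul x (y-y')).le
        have h1 : |x| ≤ A := abs_le.mpr ⟨h1, h2⟩
        have h2 : |y - y'| ≤ d - c := abs_le.mpr ⟨by linarith, by linarith⟩
        calc x * (y - y') ≤ |x| * |y - y'| := this
          _ ≤ A * (d - c) := mul_le_mul h1 h2 (abs_nonneg _) hA0
      have b2 : (x - x') * y' ≤ C * (b - a) := by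
        have : (x - x') * y' ≤ |x - x'| * |y'| := le_trans (le_abs_self _) (abs_mul _ _).le
        have h1 : |x - x'| ≤ b - a := abs_le.mpr ⟨by linarith, by linarith⟩
        have h2 : |y'| ≤ C := abs_le.mpr ⟨h7, h8⟩
        calc (x - x') * y' ≤ |x - x'| * |y'| := this
          _ ≤ C * (b - a) := by rw [mul_comm]; exact mul_le_mul h2 h1 (abs_nonneg _) hC0
      linarith
    have key : ∀ x y : ℝ, a ≤ x → x ≤ b → c ≤ y → y ≤ d → -A ≤ x → x ≤ A → -C ≤ y → y ≤ C →
        x * y - m ≤ A * (d - c) + C * (b - a) := by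
      intro x y h1 h2 h3 h4 h5 h6 h7 h8
      show x * y - min (min (a*c) (a*d)) (min (b*c) (b*d)) ≤ _
      rw [← max_sub_sub_left, ← max_sub_sub_left, ← max_sub_sub_left]
      apply max_le <;> apply max_le
      · exact hpq x y a c h5 h6 h7 h8 ha2 ha3 hc2 hc3 h3 h4 le_rfl hcd h1 h2 le_rfl hab
      · exact hpq x y a d h5 h6 h7 h8 ha2 ha3 hd2 hd3 h3 h4 hcd le_rfl h1 h2 le_rfl hab
      · exact hpq x y b c h5 h6 h7 h8 hb2 hb3 hc2 hc3 h3 h4 le_rfl hcd h1 h2 hab le_rfl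
      · exact hpq x y b d h5 h6 h7 h8 hb2 hb3 hd2 hd3 h3 h4 hcd le_rfl h1 h2 hab le_rfl
    have : M - m ≤ A * (d - c) + C * (b - a) := by
      rw [sub_le_iff_le_add]
      apply max_le <;> apply max_le <;> rw [← sub_le_iff_le_add]
      · exact key a c le_rfl hab le_rfl hcd ha2 ha3 hc2 hc3
      · exact key a d le_rfl hab hcd le_rfl ha2 ha3 hd2 hd3
      · exact key b c hab le_rfl le_rfl hcd hb2 hb3 hc2 hc3
      · exact key b d hab le_rfl hcd le_rfl hb2 hb3 hd2 hd3
    exact this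
  rw [norm_eq_aux a b hab, norm_eq_aux c d hcd, ← hA, ← hC]
  have hprod : 0 ≤ (b - a) * (d - c) := mul_nonneg (by linarith) (by linarith)
  rcases abs_cases (M + m) with ⟨h, _⟩ | ⟨h, _⟩ <;> rw [h] <;> nlinarith
end

section
/- Let X = [x₁, x₂] and Y = [y₁, y₂] be intervals (x₁ ≤ x₂, y₁ ≤ y₂), and suppose x₁x₂ > 0 or y₁y₂ > 0. Then φ(X·Y) = φ(X) · φ(Y), where X·Y is the classical product of intervals and the product on the right is the 𝒜₄ product on ℝ⁴. -/
set_option maxHeartbeats 1000000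

/-- The product of the algebra `𝒜₄` on `ℝ⁴`. -/
def A4mul (x y : ℝ × ℝ × ℝ × ℝ) : ℝ × ℝ × ℝ × ℝ :=
  (x.1 * y.1 + x.2.2.2 * y.2.2.2,
   x.2.1 * y.2.1 + x.2.2.1 * y.2.2.1,
   x.2.2.1 * y.2.1 + x.2.1 * y.2.2.1,
   x.2.2.2 * y.1 + x.1 * y.2.2.2)

/-- The classical product of intervals (given by their pairs of endpoints). -/
def Imul (X Y : ℝ × ℝ) : ℝ × ℝ :=
  (min (min (X.1 * Y.1) (X.1 * Y.2)) (min (X.2 * Y.1) (X.2 * Y.2)),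
   max (max (X.1 * Y.1) (X.1 * Y.2)) (max (X.2 * Y.1) (X.2 * Y.2)))

/-- The embedding `φ` of intervals into `𝒜₄` (the branches agree on overlaps). -/
noncomputable def phi (X : ℝ × ℝ) : ℝ × ℝ × ℝ × ℝ :=
  if 0 ≤ X.1 then (X.1, X.2, 0, 0)
  else if 0 ≤ X.2 then (0, X.2, -X.1, 0)
  else (0, 0, -X.1, -X.2)

lemma min4 (a b c d m : ℝ) (ha : m ≤ a) (hb : m ≤ b) (hc : m ≤ c) (hd : m ≤ d)
    (h : m = a ∨ m = b ∨ m = c ∨ m = d) : min (min a b) (min c d) = m := by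
  refine le_antisymm ?_ (le_min (le_min ha hb) (le_min hc hd))
  rcases h with rfl | rfl | rfl | rfl
  · exact min_le_of_left_le (min_le_left _ _)
  · exact min_le_of_left_le (min_le_right _ _)
  · exact min_le_of_right_le (min_le_left _ _)
  · exact min_le_of_right_le (min_le_right _ _)

lemma max4 (a b c d m : ℝ) (ha : a ≤ m) (hb : b ≤ m) (hc : c ≤ m) (hd : d ≤ m)
    (h : m = a ∨ m = b ∨ m = c ∨ m = d) : max (max a b) (max c d) = m := by
  refine le_antisymm (max_le (max_le ha hb) (max_le hc hd)) ?_
  rcases h with rfl | rfl | rfl | rfl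
  · exact le_max_of_le_left (le_max_left _ _)
  · exact le_max_of_le_left (le_max_right _ _)
  · exact le_max_of_le_right (le_max_left _ _)
  · exact le_max_of_le_right (le_max_right _ _)

lemma casePP (x1 x2 y1 y2 : ℝ) (hX : x1 ≤ x2) (hY : y1 ≤ y2)
    (hx1 : 0 ≤ x1) (hy1 : 0 ≤ y1) :
    phi (Imul (x1, x2) (y1, y2)) = A4mul (phi (x1, x2)) (phi (y1, y2)) := by
  have hx2 : 0 ≤ x2 := hx1.trans hX
  have hy2 : 0 ≤ y2 := hy1.trans hY
  have hI : Imul (x1, x2) (y1, y2) = (x1 * y1, x2 * y2) := by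
    unfold Imul; dsimp only
    rw [min4 _ _ _ _ _ le_rfl (by nlinarith) (by nlinarith) (by nlinarith) (.inl rfl),
        max4 _ _ _ _ _ (by nlinarith) (by nlinarith) (by nlinarith) le_rfl (.inr (.inr (.inr rfl)))]
  rw [hI]
  simp only [phi, A4mul]
  split_ifs <;>
    first
      | (exfalso; nlinarith)
      | (simp only [Prod.mk.injEq]; refine ⟨?_, ?_, ?_, ?_⟩ <;>
          first | ring1 | (apply le_antisymm <;> nlinarith))

lemma casePM (x1 x2 y1 y2 : ℝ) (hX : x1 ≤ x2) (hY : y1 ≤ y2)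
    (hx1 : 0 < x1) (hy1 : y1 ≤ 0) (hy2 : 0 ≤ y2) :
    phi (Imul (x1, x2) (y1, y2)) = A4mul (phi (x1, x2)) (phi (y1, y2)) := by
  have hx2 : 0 < x1 := hx1
  have hx2' : 0 ≤ x2 := hx1.le.trans hX
  have hI : Imul (x1, x2) (y1, y2) = (x2 * y1, x2 * y2) := by
    unfold Imul; dsimp only
    rw [min4 _ _ _ _ _ (by nlinarith) (by nlinarith) le_rfl (by nlinarith) (.inr (.inr (.inl rfl))),
        max4 _ _ _ _ _ (by nlinarith) (by nlinarith) (by nlinarith) le_rfl (.inr (.inr (.inr rfl)))]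
  rw [hI]
  simp only [phi, A4mul]
  split_ifs <;>
    first
      | (exfalso; nlinarith)
      | (simp only [Prod.mk.injEq]; refine ⟨?_, ?_, ?_, ?_⟩ <;>
          first | ring1 | (apply le_antisymm <;> nlinarith))

lemma casePN (x1 x2 y1 y2 : ℝ) (hX : x1 ≤ x2) (hY : y1 ≤ y2)
    (hx1 : 0 ≤ x1) (hy2 : y2 < 0) :
    phi (Imul (x1, x2) (y1, y2)) = A4mul (phi (x1, x2)) (phi (y1, y2)) := by
  have hx2 : 0 ≤ x2 := hx1.trans hX
  have hy1 : y1 < 0 := lt_of_le_of_lt hY hy2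
  have hI : Imul (x1, x2) (y1, y2) = (x2 * y1, x1 * y2) := by
    unfold Imul; dsimp only
    rw [min4 _ _ _ _ _ (by nlinarith) (by nlinarith) le_rfl (by nlinarith) (.inr (.inr (.inl rfl))),
        max4 _ _ _ _ _ (by nlinarith) le_rfl (by nlinarith) (by nlinarith) (.inr (.inl rfl))]
  rw [hI]
  simp only [phi, A4mul]
  split_ifs <;>
    first
      | (exfalso; nlinarith)
      | (simp only [Prod.mk.injEq]; refine ⟨?_, ?_, ?_, ?_⟩ <;>
          first | ring1 | (apply le_antisymm <;> nlinarith))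

lemma caseNP (x1 x2 y1 y2 : ℝ) (hX : x1 ≤ x2) (hY : y1 ≤ y2)
    (hx2 : x2 < 0) (hy1 : 0 ≤ y1) :
    phi (Imul (x1, x2) (y1, y2)) = A4mul (phi (x1, x2)) (phi (y1, y2)) := by
  have hx1 : x1 < 0 := lt_of_le_of_lt hX hx2
  have hy2 : 0 ≤ y2 := hy1.trans hY
  have hI : Imul (x1, x2) (y1, y2) = (x1 * y2, x2 * y1) := by
    unfold Imul; dsimp only
    rw [min4 _ _ _ _ _ (by nlinarith) le_rfl (by nlinarith) (by nlinarith) (.inr (.inl rfl)),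
        max4 _ _ _ _ _ (by nlinarith) (by nlinarith) le_rfl (by nlinarith) (.inr (.inr (.inl rfl)))]
  rw [hI]
  simp only [phi, A4mul]
  split_ifs <;>
    first
      | (exfalso; nlinarith)
      | (simp only [Prod.mk.injEq]; refine ⟨?_, ?_, ?_, ?_⟩ <;>
          first | ring1 | (apply le_antisymm <;> nlinarith))

lemma caseNM (x1 x2 y1 y2 : ℝ) (hX : x1 ≤ x2) (hY : y1 ≤ y2)
    (hx2 : x2 < 0) (hy1 : y1 ≤ 0) (hy2 : 0 ≤ y2) :
    phi (Imul (x1, x2) (y1, y2)) = A4mul (phi (x1, x2)) (phi (y1, y2)) := by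
  have hx1 : x1 < 0 := lt_of_le_of_lt hX hx2
  have hI : Imul (x1, x2) (y1, y2) = (x1 * y2, x1 * y1) := by
    unfold Imul; dsimp only
    rw [min4 _ _ _ _ _ (by nlinarith) le_rfl (by nlinarith) (by nlinarith) (.inr (.inl rfl)),
        max4 _ _ _ _ _ le_rfl (by nlinarith) (by nlinarith) (by nlinarith) (.inl rfl)]
  rw [hI]
  simp only [phi, A4mul]
  split_ifs <;>
    first
      | (exfalso; nlinarith)
      | (simp only [Prod.mk.injEq]; refine ⟨?_, ?_, ?_, ?_⟩ <;>
          first | ring1 | (apply le_antisymm <;> nlinarith))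

lemma caseNN (x1 x2 y1 y2 : ℝ) (hX : x1 ≤ x2) (hY : y1 ≤ y2)
    (hx2 : x2 < 0) (hy2 : y2 < 0) :
    phi (Imul (x1, x2) (y1, y2)) = A4mul (phi (x1, x2)) (phi (y1, y2)) := by
  have hx1 : x1 < 0 := lt_of_le_of_lt hX hx2
  have hy1 : y1 < 0 := lt_of_le_of_lt hY hy2
  have hI : Imul (x1, x2) (y1, y2) = (x2 * y2, x1 * y1) := by
    unfold Imul; dsimp only
    rw [min4 _ _ _ _ _ (by nlinarith) (by nlinarith) (by nlinarith) le_rfl (.inr (.inr (.inr rfl))),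
        max4 _ _ _ _ _ le_rfl (by nlinarith) (by nlinarith) (by nlinarith) (.inl rfl)]
  rw [hI]
  simp only [phi, A4mul]
  split_ifs <;>
    first
      | (exfalso; nlinarith)
      | (simp only [Prod.mk.injEq]; refine ⟨?_, ?_, ?_, ?_⟩ <;>
          first | ring1 | (apply le_antisymm <;> nlinarith))

lemma caseMP (x1 x2 y1 y2 : ℝ) (hX : x1 ≤ x2) (hY : y1 ≤ y2)
    (hx1 : x1 ≤ 0) (hx2 : 0 ≤ x2) (hy1 : 0 < y1) :
    phi (Imul (x1, x2) (y1, y2)) = A4mul (phi (x1, x2)) (phi (y1, y2)) := by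
  have hy2 : 0 < y2 := lt_of_lt_of_le hy1 hY
  have hI : Imul (x1, x2) (y1, y2) = (x1 * y2, x2 * y2) := by
    unfold Imul; dsimp only
    rw [min4 _ _ _ _ _ (by nlinarith) le_rfl (by nlinarith) (by nlinarith) (.inr (.inl rfl)),
        max4 _ _ _ _ _ (by nlinarith) (by nlinarith) (by nlinarith) le_rfl (.inr (.inr (.inr rfl)))]
  rw [hI]
  simp only [phi, A4mul]
  split_ifs <;>
    first
      | (exfalso; nlinarith)
      | (simp only [Prod.mk.injEq]; refine ⟨?_, ?_, ?_, ?_⟩ <;>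
          first | ring1 | (apply le_antisymm <;> nlinarith))

lemma caseMN (x1 x2 y1 y2 : ℝ) (hX : x1 ≤ x2) (hY : y1 ≤ y2)
    (hx1 : x1 ≤ 0) (hx2 : 0 ≤ x2) (hy2 : y2 < 0) :
    phi (Imul (x1, x2) (y1, y2)) = A4mul (phi (x1, x2)) (phi (y1, y2)) := by
  have hy1 : y1 < 0 := lt_of_le_of_lt hY hy2
  have hI : Imul (x1, x2) (y1, y2) = (x2 * y1, x1 * y1) := by
    unfold Imul; dsimp only
    rw [min4 _ _ _ _ _ (by nlinarith) (by nlinarith) le_rfl (by nlinarith) (.inr (.inr (.inl rfl))),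
        max4 _ _ _ _ _ le_rfl (by nlinarith) (by nlinarith) (by nlinarith) (.inl rfl)]
  rw [hI]
  simp only [phi, A4mul]
  split_ifs <;>
    first
      | (exfalso; nlinarith)
      | (simp only [Prod.mk.injEq]; refine ⟨?_, ?_, ?_, ?_⟩ <;>
          first | ring1 | (apply le_antisymm <;> nlinarith))

/-- If `x₁x₂ > 0` or `y₁y₂ > 0`, then `φ(X·Y) = φ(X)·φ(Y)`. -/
theorem phi_mul_of_sign (X Y : ℝ × ℝ) (hX : X.1 ≤ X.2) (hY : Y.1 ≤ Y.2)
    (h : 0 < X.1 * X.2 ∨ 0 < Y.1 * Y.2) :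
    phi (Imul X Y) = A4mul (phi X) (phi Y) := by
  obtain ⟨x1, x2⟩ := X
  obtain ⟨y1, y2⟩ := Y
  dsimp only at hX hY h
  rcases h with h | h
  · rcases mul_pos_iff.mp h with ⟨hx1, hx2⟩ | ⟨hx1, hx2⟩
    · rcases le_or_gt 0 y1 with hy1 | hy1
      · exact casePP _ _ _ _ hX hY hx1.le hy1
      · rcases le_or_gt 0 y2 with hy2 | hy2
        · exact casePM _ _ _ _ hX hY hx1 hy1.le hy2
        · exact casePN _ _ _ _ hX hY hx1.le hy2
    · rcases le_or_gt 0 y1 with hy1 | hy1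
      · exact caseNP _ _ _ _ hX hY hx2 hy1
      · rcases le_or_gt 0 y2 with hy2 | hy2
        · exact caseNM _ _ _ _ hX hY hx2 hy1.le hy2
        · exact caseNN _ _ _ _ hX hY hx2 hy2
  · rcases mul_pos_iff.mp h with ⟨hy1, hy2⟩ | ⟨hy1, hy2⟩
    · rcases le_or_gt 0 x1 with hx1 | hx1
      · exact casePP _ _ _ _ hX hY hx1 hy1.le
      · rcases le_or_gt 0 x2 with hx2 | hx2
        · exact caseMP _ _ _ _ hX hY hx1.le hx2 hy1
        · exact caseNP _ _ _ _ hX hY hx2 hy1.le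
    · rcases le_or_gt 0 x1 with hx1 | hx1
      · exact casePN _ _ _ _ hX hY hx1 hy2
      · rcases le_or_gt 0 x2 with hx2 | hx2
        · exact caseMN _ _ _ _ hX hY hx1.le hx2 hy2
        · exact caseNN _ _ _ _ hX hY hx2 hy2
end

section
/- Let X = [x₁, x₂] and Y = [y₁, y₂] be intervals with x₁ < 0 < x₂ and y₁ < 0 < y₂ (i.e. x₁x₂ < 0 and y₁y₂ < 0). Then the classical product X·Y is contained in the interval [x₁y₂ + x₂y₁, x₁y₁ + x₂y₂]: one has x₁y₂ + x₂y₁ ≤ min(x₁y₁, x₁y₂, x₂y₁, x₂y₂) and max(x₁y₁, x₁y₂, x₂y₁, x₂y₂) ≤ x₁y₁ + x₂y₂. (The interval [x₁y₂ + x₂y₁, x₁y₁ + x₂y₂] is the interval represented by the 𝒜₄ product φ(X)·φ(Y).) -/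
/-- If `x₁ < 0 < x₂` and `y₁ < 0 < y₂`, the classical product `X·Y` is
contained in `[x₁y₂ + x₂y₁, x₁y₁ + x₂y₂]` (the interval represented by the
`𝒜₄` product `φ(X)·φ(Y)`). -/
theorem classical_product_subset_A4_product (x₁ x₂ y₁ y₂ : ℝ)
    (hx₁ : x₁ < 0) (hx₂ : 0 < x₂) (hy₁ : y₁ < 0) (hy₂ : 0 < y₂) :
    x₁ * y₂ + x₂ * y₁ ≤
        min (min (x₁ * y₁) (x₁ * y₂)) (min (x₂ * y₁) (x₂ * y₂)) ∧
      max (max (x₁ * y₁) (x₁ * y₂)) (max (x₂ * y₁) (x₂ * y₂)) ≤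
        x₁ * y₁ + x₂ * y₂ := by
  constructor
  · simp only [le_min_iff]
    refine ⟨⟨?_, ?_⟩, ?_, ?_⟩ <;> nlinarith
  · simp only [max_le_iff]
    refine ⟨⟨?_, ?_⟩, ?_, ?_⟩ <;> nlinarith
end

section
/- Monotony of the product: let X₁ = [a₁, b₁], X₂ = [a₂, b₂] and Z = [c, d] be intervals with X₁ ⊆ X₂ (i.e. a₂ ≤ a₁ and b₁ ≤ b₂). Then X₁ • Z ⊆ X₂ • Z, where • is the product induced by the algebra 𝒜₄. -/
/-- The product of intervals induced by the algebra `𝒜₄`: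
`[a,b] • [c,d] = [ad + bc, ac + bd]` when both intervals contain `0`,
and the classical product otherwise. -/
noncomputable def bmul (X Y : ℝ × ℝ) : ℝ × ℝ :=
  if X.1 ≤ 0 ∧ 0 ≤ X.2 ∧ Y.1 ≤ 0 ∧ 0 ≤ Y.2 then
    (X.1 * Y.2 + X.2 * Y.1, X.1 * Y.1 + X.2 * Y.2)
  else Imul X Y

private lemma min_mul_le (a b c x : ℝ) (h1 : a ≤ x) (h2 : x ≤ b) :
    min (a*c) (b*c) ≤ x*c := by
  rcases le_total 0 c with hc | hc
  · exact le_trans (min_le_left _ _) (by nlinarith)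
  · exact le_trans (min_le_right _ _) (by nlinarith)

private lemma mul_le_max (a b c x : ℝ) (h1 : a ≤ x) (h2 : x ≤ b) :
    x*c ≤ max (a*c) (b*c) := by
  rcases le_total 0 c with hc | hc
  · exact le_trans (by nlinarith) (le_max_right _ _)
  · exact le_trans (by nlinarith) (le_max_left _ _)

private lemma prod_lb (a b c d x z : ℝ) (ha : a ≤ 0) (hb : 0 ≤ b)
    (hc : c ≤ 0) (hd : 0 ≤ d) (h1 : a ≤ x) (h2 : x ≤ b) (h3 : c ≤ z) (h4 : z ≤ d) :
    a*d + b*c ≤ x*z := by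
  rcases le_total 0 z with hz | hz
  · nlinarith
  · nlinarith

private lemma prod_ub (a b c d x z : ℝ) (ha : a ≤ 0) (hb : 0 ≤ b)
    (hc : c ≤ 0) (hd : 0 ≤ d) (h1 : a ≤ x) (h2 : x ≤ b) (h3 : c ≤ z) (h4 : z ≤ d) :
    x*z ≤ a*c + b*d := by
  rcases le_total 0 z with hz | hz
  · nlinarith
  · nlinarith

/-- Monotony of the `𝒜₄`-induced product: `X₁ ⊆ X₂` implies `X₁ • Z ⊆ X₂ • Z`. -/
theorem bmul_monotone (X₁ X₂ Z : ℝ × ℝ)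
    (hX₁ : X₁.1 ≤ X₁.2) (hX₂ : X₂.1 ≤ X₂.2) (hZ : Z.1 ≤ Z.2)
    (h₁ : X₂.1 ≤ X₁.1) (h₂ : X₁.2 ≤ X₂.2) :
    (bmul X₂ Z).1 ≤ (bmul X₁ Z).1 ∧ (bmul X₁ Z).2 ≤ (bmul X₂ Z).2 := by
  obtain ⟨a₁, b₁⟩ := X₁
  obtain ⟨a₂, b₂⟩ := X₂
  obtain ⟨c, d⟩ := Z
  dsimp only at *
  unfold bmul Imul
  dsimp only
  have hxa : a₂ ≤ a₁ := h₁
  have hxb₁ : a₁ ≤ b₂ := le_trans hX₁ h₂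
  have hxb₂ : a₂ ≤ b₁ := le_trans h₁ hX₁
  by_cases hA : a₁ ≤ 0 ∧ 0 ≤ b₁ ∧ c ≤ 0 ∧ 0 ≤ d
  · obtain ⟨ha1, hb1, hc, hd⟩ := hA
    rw [if_pos ⟨le_trans h₁ ha1, le_trans hb1 h₂, hc, hd⟩, if_pos ⟨ha1, hb1, hc, hd⟩]
    constructor <;> dsimp only <;>
      nlinarith [mul_le_mul_of_nonneg_right h₁ hd, mul_le_mul_of_nonneg_right h₂ hd,
        mul_le_mul_of_nonpos_right h₁ hc, mul_le_mul_of_nonpos_right h₂ hc]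
  · rw [if_neg hA]
    by_cases hB : a₂ ≤ 0 ∧ 0 ≤ b₂ ∧ c ≤ 0 ∧ 0 ≤ d
    · obtain ⟨ha2, hb2, hc, hd⟩ := hB
      rw [if_pos ⟨ha2, hb2, hc, hd⟩]
      constructor
      · exact le_min
          (le_min (prod_lb a₂ b₂ c d a₁ c ha2 hb2 hc hd hxa hxb₁ le_rfl hZ)
                  (prod_lb a₂ b₂ c d a₁ d ha2 hb2 hc hd hxa hxb₁ hZ le_rfl))
          (le_min (prod_lb a₂ b₂ c d b₁ c ha2 hb2 hc hd hxb₂ h₂ le_rfl hZ)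
                  (prod_lb a₂ b₂ c d b₁ d ha2 hb2 hc hd hxb₂ h₂ hZ le_rfl))
      · exact max_le
          (max_le (prod_ub a₂ b₂ c d a₁ c ha2 hb2 hc hd hxa hxb₁ le_rfl hZ)
                  (prod_ub a₂ b₂ c d a₁ d ha2 hb2 hc hd hxa hxb₁ hZ le_rfl))
          (max_le (prod_ub a₂ b₂ c d b₁ c ha2 hb2 hc hd hxb₂ h₂ le_rfl hZ)
                  (prod_ub a₂ b₂ c d b₁ d ha2 hb2 hc hd hxb₂ h₂ hZ le_rfl))
    · rw [if_neg hB]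
      have Lc : min (min (a₂*c) (a₂*d)) (min (b₂*c) (b₂*d)) ≤ min (a₂*c) (b₂*c) :=
        le_min (le_trans (min_le_left _ _) (min_le_left _ _))
               (le_trans (min_le_right _ _) (min_le_left _ _))
      have Ld : min (min (a₂*c) (a₂*d)) (min (b₂*c) (b₂*d)) ≤ min (a₂*d) (b₂*d) :=
        le_min (le_trans (min_le_left _ _) (min_le_right _ _))
               (le_trans (min_le_right _ _) (min_le_right _ _))
      have Uc : max (a₂*c) (b₂*c) ≤ max (max (a₂*c) (a₂*d)) (max (b₂*c) (b₂*d)) :=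
        max_le (le_trans (le_max_left _ _) (le_max_left _ _))
               (le_trans (le_max_left _ _) (le_max_right _ _))
      have Ud : max (a₂*d) (b₂*d) ≤ max (max (a₂*c) (a₂*d)) (max (b₂*c) (b₂*d)) :=
        max_le (le_trans (le_max_right _ _) (le_max_left _ _))
               (le_trans (le_max_right _ _) (le_max_right _ _))
      constructor
      · exact le_min
          (le_min (Lc.trans (min_mul_le a₂ b₂ c a₁ hxa hxb₁))
                  (Ld.trans (min_mul_le a₂ b₂ d a₁ hxa hxb₁)))
          (le_min (Lc.trans (min_mul_le a₂ b₂ c b₁ hxb₂ h₂))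
                  (Ld.trans (min_mul_le a₂ b₂ d b₁ hxb₂ h₂)))
      · exact max_le
          (max_le ((mul_le_max a₂ b₂ c a₁ hxa hxb₁).trans Uc)
                  ((mul_le_max a₂ b₂ d a₁ hxa hxb₁).trans Ud))
          (max_le ((mul_le_max a₂ b₂ c b₁ hxb₂ h₂).trans Uc)
                  ((mul_le_max a₂ b₂ d b₁ hxb₂ h₂).trans Ud))
end

section
/- Division by an invertible element: let X = [x₁, x₂] and Y = [y₁, y₂] with 0 < x₁ ≤ x₂ and 0 < y₁ ≤ y₂. If y₂/y₁ ≥ x₂/x₁ (equivalently x₂y₁ ≤ x₁y₂), then there exists a unique interval Z = [z₁, z₂] with 0 ≤ z₁ ≤ z₂ such that Y = X·Z for the classical interval product, namely y₁ = x₁z₁ and y₂ = x₂z₂ (so z₁ = y₁/x₁ and z₂ = y₂/x₂). -/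
lemma imul_nonneg (x₁ x₂ z₁ z₂ : ℝ) (hx₁ : 0 < x₁) (hx : x₁ ≤ x₂)
    (hz₁ : 0 ≤ z₁) (hz : z₁ ≤ z₂) :
    Imul (x₁, x₂) (z₁, z₂) = (x₁ * z₁, x₂ * z₂) := by
  have h1 : x₁ * z₁ ≤ x₁ * z₂ := by nlinarith
  have h2 : x₁ * z₁ ≤ x₂ * z₁ := by nlinarith
  have h3 : x₂ * z₁ ≤ x₂ * z₂ := by nlinarith
  have h4 : x₁ * z₂ ≤ x₂ * z₂ := by nlinarith
  simp only [Imul]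
  congr 1
  · rw [min_eq_left h1, min_eq_left h3, min_eq_left h2]
  · rw [max_eq_right h1, max_eq_right h3, max_eq_right h4]

/-- Division by an invertible element: if `0 < x₁ ≤ x₂`, `0 < y₁ ≤ y₂` and
`y₂/y₁ ≥ x₂/x₁` (i.e. `x₂y₁ ≤ x₁y₂`), then there is a unique interval
`Z = [z₁,z₂]` with `0 ≤ z₁ ≤ z₂` such that `Y = X·Z`; it is
`Z = [y₁/x₁, y₂/x₂]`. -/
theorem division_by_invertible (x₁ x₂ y₁ y₂ : ℝ)
    (hx₁ : 0 < x₁) (hx : x₁ ≤ x₂) (hy₁ : 0 < y₁) (hy : y₁ ≤ y₂)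
    (h : x₂ * y₁ ≤ x₁ * y₂) :
    (∃! Z : ℝ × ℝ, (0 ≤ Z.1 ∧ Z.1 ≤ Z.2) ∧ Imul (x₁, x₂) Z = (y₁, y₂)) ∧
    (0 ≤ y₁ / x₁ ∧ y₁ / x₁ ≤ y₂ / x₂) ∧
    Imul (x₁, x₂) (y₁ / x₁, y₂ / x₂) = (y₁, y₂) := by
  have hx₂ : (0:ℝ) < x₂ := lt_of_lt_of_le hx₁ hx
  have hz₁ : 0 ≤ y₁ / x₁ := le_of_lt (div_pos hy₁ hx₁)
  have hz : y₁ / x₁ ≤ y₂ / x₂ := by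
    rw [div_le_div_iff₀ hx₁ hx₂]; nlinarith
  have key : Imul (x₁, x₂) (y₁ / x₁, y₂ / x₂) = (y₁, y₂) := by
    rw [imul_nonneg _ _ _ _ hx₁ hx hz₁ hz, mul_div_cancel₀ _ (ne_of_gt hx₁),
      mul_div_cancel₀ _ (ne_of_gt hx₂)]
  refine ⟨⟨(y₁ / x₁, y₂ / x₂), ⟨⟨hz₁, hz⟩, key⟩, ?_⟩, ⟨hz₁, hz⟩, key⟩
  rintro ⟨z₁, z₂⟩ ⟨⟨h1, h2⟩, h3⟩
  rw [imul_nonneg _ _ _ _ hx₁ hx h1 h2, Prod.mk.injEq] at h3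
  obtain ⟨e1, e2⟩ := h3
  rw [Prod.mk.injEq]
  constructor
  · field_simp [← e1, mul_comm]; simpa [mul_comm] using e1
  · field_simp [← e2, mul_comm]; simpa [mul_comm] using e2
end

section
/- Division by a non-invertible element, first case: let x₁, x₂, y₁, y₂ > 0 with x₁ < x₂, x₁y₂ < x₂y₁ and x₁y₁ < x₂y₂ (i.e. x₁/x₂ < y₁/y₂ and x₁/x₂ < y₂/y₁). Then there exist z₂, z₃ ≥ 0 such that y₂ = x₂z₂ + x₁z₃ and y₁ = x₁z₂ + x₂z₃; explicitly z₂ = (x₂y₂ − x₁y₁)/(x₂² − x₁²) and z₃ = (x₂y₁ − x₁y₂)/(x₂² − x₁²). Equivalently, Y = [−y₁, y₂] satisfies Y = X • Z with X = [−x₁, x₂] and Z = [−z₃, z₂]. -/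
/-- Division by a non-invertible element, first case (`x₁ < x₂`):
if `x₁/x₂ < y₁/y₂` and `x₁/x₂ < y₂/y₁`, then `z₂ = (x₂y₂ − x₁y₁)/(x₂² − x₁²)`
and `z₃ = (x₂y₁ − x₁y₂)/(x₂² − x₁²)` are nonnegative and satisfy
`y₂ = x₂z₂ + x₁z₃` and `y₁ = x₁z₂ + x₂z₃`, i.e.
`[−y₁, y₂] = [−x₁, x₂] • [−z₃, z₂]`. -/
theorem division_noninvertible_first_case (x₁ x₂ y₁ y₂ : ℝ)
    (hx₁ : 0 < x₁) (hx₂ : 0 < x₂) (hy₁ : 0 < y₁) (hy₂ : 0 < y₂)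
    (hx : x₁ < x₂) (h₁ : x₁ * y₂ < x₂ * y₁) (h₂ : x₁ * y₁ < x₂ * y₂) :
    let z₂ : ℝ := (x₂ * y₂ - x₁ * y₁) / (x₂ ^ 2 - x₁ ^ 2)
    let z₃ : ℝ := (x₂ * y₁ - x₁ * y₂) / (x₂ ^ 2 - x₁ ^ 2)
    0 ≤ z₂ ∧ 0 ≤ z₃ ∧ y₂ = x₂ * z₂ + x₁ * z₃ ∧ y₁ = x₁ * z₂ + x₂ * z₃ := by
  have hd : (0:ℝ) < x₂ ^ 2 - x₁ ^ 2 := by nlinarith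
  refine ⟨div_nonneg (by linarith) hd.le, div_nonneg (by linarith) hd.le, ?_, ?_⟩ <;> field_simp <;> ring
end

section
/- Division by a non-invertible element, second case: let x₁, x₂, y₁, y₂ > 0 with x₁ > x₂, x₁y₂ > x₂y₁ and x₁y₁ > x₂y₂ (i.e. x₁/x₂ > y₁/y₂ and x₁/x₂ > y₂/y₁). Then there exist z₂, z₃ ≥ 0 such that y₂ = x₂z₂ + x₁z₃ and y₁ = x₁z₂ + x₂z₃; explicitly z₂ = (x₁y₁ − x₂y₂)/(x₁² − x₂²) and z₃ = (x₁y₂ − x₂y₁)/(x₁² − x₂²). Equivalently, Y = [−y₁, y₂] satisfies Y = X • Z with X = [−x₁, x₂] and Z = [−z₃, z₂]. -/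
/-- Division by a non-invertible element, second case (`x₁ > x₂`):
if `x₁/x₂ > y₁/y₂` and `x₁/x₂ > y₂/y₁`, then `z₂ = (x₁y₁ − x₂y₂)/(x₁² − x₂²)`
and `z₃ = (x₁y₂ − x₂y₁)/(x₁² − x₂²)` are nonnegative and satisfy
`y₂ = x₂z₂ + x₁z₃` and `y₁ = x₁z₂ + x₂z₃`, i.e.
`[−y₁, y₂] = [−x₁, x₂] • [−z₃, z₂]`. -/
theorem division_noninvertible_second_case (x₁ x₂ y₁ y₂ : ℝ)
    (hx₁ : 0 < x₁) (hx₂ : 0 < x₂) (hy₁ : 0 < y₁) (hy₂ : 0 < y₂)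
    (hx : x₂ < x₁) (h₁ : x₂ * y₁ < x₁ * y₂) (h₂ : x₂ * y₂ < x₁ * y₁) :
    let z₂ : ℝ := (x₁ * y₁ - x₂ * y₂) / (x₁ ^ 2 - x₂ ^ 2)
    let z₃ : ℝ := (x₁ * y₂ - x₂ * y₁) / (x₁ ^ 2 - x₂ ^ 2)
    0 ≤ z₂ ∧ 0 ≤ z₃ ∧ y₂ = x₂ * z₂ + x₁ * z₃ ∧ y₁ = x₁ * z₂ + x₂ * z₃ := by
  intro z₂ z₃
  have hd : 0 < x₁ ^ 2 - x₂ ^ 2 := by nlinarith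
  refine ⟨div_nonneg (by linarith) hd.le, div_nonneg (by linarith) hd.le, ?_, ?_⟩ <;>
    simp only [z₂, z₃] <;> field_simp [hd.ne'] <;> ring
end

section
/- Euclidean division by a non-invertible element: let x₁, x₂, y₁, y₂ > 0 with x₁ < x₂, x₁y₁ > x₂y₂ and x₁y₂ < x₂y₁ (i.e. x₁/x₂ > y₂/y₁ and x₁/x₂ < y₁/y₂). Among all quadruples (z₂, z₃, r₁, r₂) of nonnegative reals satisfying y₂ = x₂z₂ + x₁z₃ + r₂ and y₁ = x₁z₂ + x₂z₃ + r₁ (i.e. Y = X • Z + R with X = [−x₁,x₂], Y = [−y₁,y₂], Z = [−z₃,z₂], R = [−r₁,r₂]), the quadruple (z₂, z₃, r₁, r₂) = (0, y₂/x₁, (x₁y₁ − x₂y₂)/x₁, 0) is a solution, and it is the unique solution minimizing the remainder length r₁ + r₂. -/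
/-- Euclidean division by a non-invertible element: with `x₁ < x₂`,
`x₁y₁ > x₂y₂` and `x₁y₂ < x₂y₁`, among all nonnegative quadruples
`(z₂, z₃, r₁, r₂)` with `y₂ = x₂z₂ + x₁z₃ + r₂` and `y₁ = x₁z₂ + x₂z₃ + r₁`
(i.e. `[−y₁,y₂] = [−x₁,x₂] • [−z₃,z₂] + [−r₁,r₂]`), the quadruple
`(0, y₂/x₁, (x₁y₁ − x₂y₂)/x₁, 0)` is a solution, and it is the unique one
minimizing the remainder length `r₁ + r₂`. -/
theorem euclidean_division_noninvertible (x₁ x₂ y₁ y₂ : ℝ)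
    (hx₁ : 0 < x₁) (hx₂ : 0 < x₂) (hy₁ : 0 < y₁) (hy₂ : 0 < y₂)
    (hx : x₁ < x₂) (h₁ : x₂ * y₂ < x₁ * y₁) (h₂ : x₁ * y₂ < x₂ * y₁) :
    -- the announced quadruple is a solution
    (0 ≤ y₂ / x₁ ∧ 0 ≤ (x₁ * y₁ - x₂ * y₂) / x₁ ∧
      y₂ = x₂ * 0 + x₁ * (y₂ / x₁) + 0 ∧
      y₁ = x₁ * 0 + x₂ * (y₂ / x₁) + (x₁ * y₁ - x₂ * y₂) / x₁) ∧
    -- it minimizes the remainder length, and is the unique minimizer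
    (∀ z₂ z₃ r₁ r₂ : ℝ, 0 ≤ z₂ → 0 ≤ z₃ → 0 ≤ r₁ → 0 ≤ r₂ →
      y₂ = x₂ * z₂ + x₁ * z₃ + r₂ → y₁ = x₁ * z₂ + x₂ * z₃ + r₁ →
      (x₁ * y₁ - x₂ * y₂) / x₁ + 0 ≤ r₁ + r₂ ∧
        (r₁ + r₂ = (x₁ * y₁ - x₂ * y₂) / x₁ + 0 →
          z₂ = 0 ∧ z₃ = y₂ / x₁ ∧ r₁ = (x₁ * y₁ - x₂ * y₂) / x₁ ∧ r₂ = 0)) := by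
  have hx₁' : x₁ ≠ 0 := ne_of_gt hx₁
  constructor
  · refine ⟨le_of_lt (div_pos hy₂ hx₁), le_of_lt (div_pos (by linarith) hx₁), ?_, ?_⟩
    · field_simp; ring
    · field_simp; ring
  · intro z₂ z₃ r₁ r₂ hz₂ hz₃ hr₁ hr₂ e₂ e₁
    have key : x₁ * (z₂ + z₃) ≤ y₂ := by nlinarith
    have hbound : (x₁ * y₁ - x₂ * y₂) / x₁ + 0 ≤ r₁ + r₂ := by
      rw [div_add' _ _ _ hx₁', div_le_iff₀ hx₁]
      nlinarith
    refine ⟨hbound, fun heq => ?_⟩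
    have heq' : (r₁ + r₂) * x₁ = x₁ * y₁ - x₂ * y₂ := by
      field_simp at heq; linarith
    have hsum : x₁ * (z₂ + z₃) = y₂ := by nlinarith
    have hz2 : z₂ = 0 := by nlinarith
    have hz3 : z₃ = y₂ / x₁ := by
      field_simp; nlinarith
    have hr2 : r₂ = 0 := by nlinarith
    have hr1 : r₁ = (x₁ * y₁ - x₂ * y₂) / x₁ := by
      rw [eq_div_iff hx₁']; nlinarith
    exact ⟨hz2, hz3, hr1, hr2⟩
end

section
/- The squaring function q₂ is continuous: the map f : ℝ² → ℝ² defined by f(u,v) = (u², v²) if 0 ≤ u ≤ v, f(u,v) = (v², u²) if u ≤ v ≤ 0, f(u,v) = (0, max(u², v²)) if u ≤ 0 ≤ v, and f(u,v) = f(−u,−v) if v < u, is continuous on ℝ² (equivalently, continuous with respect to the norm N(u,v) = |v − u| + |u + v|/2, which induces the standard topology of ℝ²). -/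
/-- The squaring function `q₂` on intervals, in the coordinates of the group
completion `ℝ²`, on the half-plane `u ≤ v`. -/
noncomputable def q2aux (p : ℝ × ℝ) : ℝ × ℝ :=
  if 0 ≤ p.1 then (p.1 ^ 2, p.2 ^ 2)
  else if p.2 ≤ 0 then (p.2 ^ 2, p.1 ^ 2)
  else (0, max (p.1 ^ 2) (p.2 ^ 2))

/-- The squaring function `q₂` on all of `ℝ²`: it takes the same value on a
class and on its additive inverse. -/
noncomputable def q2 (p : ℝ × ℝ) : ℝ × ℝ :=
  if p.2 < p.1 then q2aux (-p) else q2aux p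

/-- A closed form for `q2`. -/
noncomputable def q2' (p : ℝ × ℝ) : ℝ × ℝ :=
  ((max (min p.1 p.2) 0) ^ 2 + (min (max p.1 p.2) 0) ^ 2, max (p.1 ^ 2) (p.2 ^ 2))

lemma q2_eq_q2' : q2 = q2' := by
  funext p
  obtain ⟨u, v⟩ := p
  simp only [q2, q2aux, q2']
  rcases lt_or_ge v u with h | h
  · rw [if_pos h, min_eq_right h.le, max_eq_left h.le]
    simp only [Prod.fst_neg, Prod.snd_neg]
    rcases le_or_gt u 0 with hu | hu
    · rw [if_pos (by linarith : (0:ℝ) ≤ -u), max_eq_right (by linarith : v ≤ 0),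
        min_eq_left hu, max_eq_right (by nlinarith : u ^ 2 ≤ v ^ 2)]
      exact Prod.ext (by ring) (by ring)
    · rw [if_neg (by intro hh; linarith [neg_nonneg.mp hh] : ¬ (0:ℝ) ≤ -u)]
      rcases le_or_gt 0 v with hv | hv
      · rw [if_pos (by linarith : -v ≤ 0), max_eq_left hv, min_eq_right hu.le,
          max_eq_left (by nlinarith : v ^ 2 ≤ u ^ 2)]
        exact Prod.ext (by ring) (by ring)
      · rw [if_neg (by intro hh; linarith [neg_nonpos.mp hh] : ¬ (-v:ℝ) ≤ 0),
          max_eq_right hv.le, min_eq_right hu.le]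
        exact Prod.ext (by norm_num)
          (by rw [show (-u:ℝ) ^ 2 = u ^ 2 by ring, show (-v:ℝ) ^ 2 = v ^ 2 by ring])
  · rw [if_neg (not_lt.mpr h), min_eq_left h, max_eq_right h]
    rcases le_or_gt 0 u with hu | hu
    · rw [if_pos hu, max_eq_left hu, min_eq_right (by linarith : (0:ℝ) ≤ v)]
      rw [max_eq_right (by nlinarith : u ^ 2 ≤ v ^ 2)]
      exact Prod.ext (by ring) rfl
    · rw [if_neg (not_le.mpr hu), max_eq_right hu.le]
      rcases le_or_gt v 0 with hv | hv
      · rw [if_pos hv, min_eq_left hv]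
        rw [max_eq_left (by nlinarith : v ^ 2 ≤ u ^ 2)]
        exact Prod.ext (by ring) rfl
      · rw [if_neg (not_le.mpr hv), min_eq_right hv.le]
        exact Prod.ext (by ring) rfl

/-- The squaring function `q₂` is continuous on `ℝ²` (the norm
`N(u,v) = |v − u| + |u + v|/2` induces the standard topology of `ℝ²`). -/
theorem q2_continuous : Continuous q2 := by
  rw [q2_eq_q2']
  unfold q2'
  fun_prop
end
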